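/- For integers q ≥ 2h with h ≥ 2, the set S_q = {±q^n : n ≥ 0} ∪ {0} satisfies property P(h). -/

import Mathlib

/-- `s` is a representation of `D` as a sum of `h` elements of `A` (as a multiset). -/
def IsRep (A : Set ℤ) (h : ℕ) (D : ℤ) (s : Multiset ℤ) : Prop :=
  Multiset.card s = h ∧ (∀ x ∈ s, x ∈ A) ∧ s.sum = D

/-- A core multiset for property `P(h)`: at most `h` elements of `A`, with the same
parity of cardinality as `h`, and with `aᵢ ≠ -aⱼ` for `i ≠ j`. -/
def IsCore (A : Set ℤ) (h : ℕ) (c : Multiset ℤ) : Prop :=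
  Multiset.card c ≤ h ∧ Multiset.card c % 2 = h % 2 ∧ (∀ x ∈ c, x ∈ A) ∧
    ∀ x ∈ c, -x ∉ c.erase x

/-- `s` is, up to permutation, the core `c` together with cancelling pairs `(u, -u)`
with `u ∈ A ∩ (-A)`. -/
def MatchesCore (A : Set ℤ) (c s : Multiset ℤ) : Prop :=
  ∃ p : Multiset ℤ, (∀ u ∈ p, u ∈ A ∧ -u ∈ A) ∧ s = c + p + p.map (fun u => -u)

/-- Property `P(h)`: every `D` in the `h`-fold sumset of `A` has a unique core, such that
every representation of `D` as a sum of `h` elements of `A` is a permutation of the core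
together with cancelling pairs `(u, -u)`, `u ∈ A ∩ (-A)`. -/
def PropertyP (A : Set ℤ) (h : ℕ) : Prop :=
  ∀ D : ℤ, (∃ s, IsRep A h D s) →
    ∃! c : Multiset ℤ, IsCore A h c ∧ ∀ s, IsRep A h D s → MatchesCore A c s

/-- `S` is a `B_h`-set: any two `h`-tuples of elements of `S` with equal sums are
permutations of each other. -/
def IsBhSet (S : Set ℤ) (h : ℕ) : Prop :=
  ∀ s t : Multiset ℤ, Multiset.card s = h → Multiset.card t = h →
    (∀ x ∈ s, x ∈ S) → (∀ x ∈ t, x ∈ S) → s.sum = t.sum → s = t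

/-! ### Auxiliary lemmas -/

lemma st7_core_mono {c d : Multiset ℤ} (hdc : d ≤ c) (hc : ∀ x ∈ c, -x ∉ c.erase x) :
    ∀ x ∈ d, -x ∉ d.erase x :=
  fun x hx hmem => hc x (Multiset.mem_of_le hdc hx)
    (Multiset.mem_of_le (Multiset.erase_le_erase x hdc) hmem)

lemma st7_reduce : ∀ s : Multiset ℤ, ∃ c p : Multiset ℤ,
    Multiset.card c + 2 * Multiset.card p = Multiset.card s ∧
    c ≤ s ∧ p ≤ s ∧ (∀ x ∈ c, -x ∉ c.erase x) ∧ s = c + p + p.map (fun u => -u) := by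
  intro s
  induction s using Multiset.strongInductionOn with
  | ih s ih =>
    by_cases hex : ∃ x ∈ s, -x ∈ s.erase x
    · obtain ⟨x, hx, hnx⟩ := hex
      set s' := (s.erase x).erase (-x) with hs'
      have hlt : s' < s := lt_of_le_of_lt (Multiset.erase_le _ _) (Multiset.erase_lt.2 hx)
      obtain ⟨c, p, hcard, hcs, hps, hcore, hdec⟩ := ih s' hlt
      have hsx : s = x ::ₘ (-x) ::ₘ s' := by
        rw [hs', Multiset.cons_erase hnx, Multiset.cons_erase hx]
      refine ⟨c, x ::ₘ p, ?_, ?_, ?_, hcore, ?_⟩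
      · have h1 : Multiset.card s = Multiset.card s' + 2 := by
          rw [hsx]; simp
        simp only [Multiset.card_cons]; omega
      · exact le_trans hcs (le_of_lt hlt)
      · have : x ::ₘ p ≤ x ::ₘ (s.erase x) :=
          Multiset.cons_le_cons x (le_trans hps (Multiset.erase_le _ _))
        rwa [Multiset.cons_erase hx] at this
      · rw [hsx, hdec, Multiset.map_cons]
        simp only [← Multiset.singleton_add]
        abel
    · exact ⟨s, 0, by simp, le_refl s, by simp,
        fun x hx hmem => hex ⟨x, hx, hmem⟩, by simp⟩

lemma st7_mod (q : ℤ) (hq4 : 4 ≤ q) : ∀ c : Multiset ℤ,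
    (∀ x ∈ c, ∃ n : ℕ, x = q ^ n ∨ x = -(q ^ n)) →
    q ∣ c.sum - ((c.count 1 : ℤ) - (c.count (-1) : ℤ)) := by
  intro c
  induction c using Multiset.induction with
  | empty => simp
  | cons x c ih =>
    intro hmem
    have hc := ih (fun y hy => hmem y (Multiset.mem_cons_of_mem hy))
    obtain ⟨n, hn⟩ := hmem x (Multiset.mem_cons_self x c)
    rw [Multiset.sum_cons, Multiset.count_cons, Multiset.count_cons]
    obtain ⟨k, hk⟩ := hc
    rcases Nat.eq_zero_or_pos n with h0 | hpos
    · subst h0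
      simp only [pow_zero] at hn
      rcases hn with rfl | rfl
      · rw [if_pos rfl, if_neg (by norm_num)]
        exact ⟨k, by push_cast; linarith⟩
      · rw [if_neg (by norm_num), if_pos rfl]
        exact ⟨k, by push_cast; linarith⟩
    · have hqn : (1 : ℤ) < q ^ n := by
        calc (1 : ℤ) < q := by linarith
        _ ≤ q ^ n := le_self_pow₀ (by linarith) (by omega)
      have hdx : q ∣ x := by
        rcases hn with rfl | rfl
        · exact dvd_pow_self q (by omega)
        · exact (dvd_pow_self q (n := n) (by omega)).neg_right
      have h1 : (1 : ℤ) ≠ x := by rcases hn with rfl | rfl <;> nlinarith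
      have h2 : (-1 : ℤ) ≠ x := by rcases hn with rfl | rfl <;> nlinarith
      rw [if_neg h1, if_neg h2]
      obtain ⟨j, hj⟩ := hdx
      exact ⟨k + j, by push_cast; linarith⟩

lemma st7_count_bound : ∀ c : Multiset ℤ, c.count 1 + c.count (-1) ≤ Multiset.card c := by
  intro c
  induction c using Multiset.induction with
  | empty => simp
  | cons x c ih =>
    rw [Multiset.count_cons, Multiset.count_cons, Multiset.card_cons]
    split_ifs with e1 e2 <;> omega

lemma st7_sum_mul (q : ℤ) (s : Multiset ℤ) : (s.map (fun y => y * q)).sum = s.sum * q := by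
  induction s using Multiset.induction with
  | empty => simp
  | cons x s ih => simp [ih, add_mul]

lemma st7_sum_mul_nat (k : ℕ) (s : Multiset ℕ) : (s.map (fun y => y * k)).sum = s.sum * k := by
  induction s using Multiset.induction with
  | empty => simp
  | cons x s ih => simp [ih, add_mul]

lemma st7_sum_neg (p : Multiset ℤ) : (p.map (fun u => -u)).sum = -p.sum := by
  induction p using Multiset.induction with
  | empty => simp
  | cons x p ih => simp [ih]; ring

lemma st7_divstep (q : ℤ) (hq4 : 4 ≤ q) (c : Multiset ℤ)
    (hel : ∀ x ∈ c, ∃ n : ℕ, x = q ^ (n + 1) ∨ x = -(q ^ (n + 1)))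
    (hcore : ∀ x ∈ c, -x ∉ c.erase x) :
    ∃ c2 : Multiset ℤ,
      c = c2.map (fun y => y * q) ∧
      (∀ y ∈ c2, ∃ n : ℕ, y = q ^ n ∨ y = -(q ^ n)) ∧
      (∀ y ∈ c2, -y ∉ c2.erase y) ∧
      Multiset.card c2 = Multiset.card c ∧
      c.sum = c2.sum * q ∧
      (Multiset.map Int.natAbs c).sum = (Multiset.map Int.natAbs c2).sum * q.natAbs := by
  have hq0 : q ≠ 0 := by linarith
  have key : ∀ x ∈ c, q ∣ x := by
    intro x hx
    obtain ⟨n, hn | hn⟩ := hel x hx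
    · exact hn ▸ dvd_pow_self q (Nat.succ_ne_zero n)
    · exact hn ▸ (dvd_pow_self q (Nat.succ_ne_zero n)).neg_right
  have h1 : Multiset.map (fun y => y * q) (Multiset.map (fun x => x / q) c) = c := by
    rw [Multiset.map_map]
    have h2 : ∀ x ∈ c, ((fun y => y * q) ∘ (fun x => x / q)) x = id x :=
      fun x hx => Int.ediv_mul_cancel (key x hx)
    rw [Multiset.map_congr rfl h2, Multiset.map_id]
  have ginj : Function.Injective (fun y : ℤ => y * q) :=
    fun a b hab => mul_right_cancel₀ hq0 hab
  refine ⟨c.map (fun x => x / q), h1.symm, ?_, ?_, by simp, ?_, ?_⟩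
  · intro y hy
    obtain ⟨x, hx, rfl⟩ := Multiset.mem_map.mp hy
    obtain ⟨n, hn | hn⟩ := hel x hx
    · exact ⟨n, Or.inl (by rw [hn, pow_succ, Int.mul_ediv_cancel _ hq0])⟩
    · refine ⟨n, Or.inr ?_⟩
      rw [hn, pow_succ, show -(q ^ n * q) = (-(q ^ n)) * q by ring,
        Int.mul_ediv_cancel _ hq0]
  · intro y hy hmem
    have hyc : y * q ∈ c := by
      rw [← h1]; exact Multiset.mem_map_of_mem _ hy
    apply hcore (y * q) hyc
    have : (-y) * q ∈ Multiset.map (fun y => y * q) ((c.map (fun x => x / q)).erase y) :=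
      Multiset.mem_map_of_mem _ hmem
    rw [Multiset.map_erase _ ginj, h1] at this
    simpa [neg_mul] using this
  · conv_lhs => rw [← h1]
    exact st7_sum_mul q _
  · conv_lhs => rw [← h1]
    rw [Multiset.map_map]
    have h2 : ∀ x ∈ c.map (fun x => x / q),
        (Int.natAbs ∘ (fun y => y * q)) x = ((fun y => y * q.natAbs) ∘ Int.natAbs) x := by
      intro x hx; simp [Int.natAbs_mul]
    rw [Multiset.map_congr rfl h2, ← Multiset.map_map]
    exact st7_sum_mul_nat q.natAbs _

lemma st7_elem_pos (q : ℤ) (hq4 : 4 ≤ q) {x : ℤ} (hx : ∃ n : ℕ, x = q ^ n ∨ x = -(q ^ n)) :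
    1 ≤ x.natAbs := by
  obtain ⟨n, hn | hn⟩ := hx <;>
  · have : q ^ n ≠ 0 := pow_ne_zero n (by linarith)
    rw [hn]
    simp [Int.natAbs_pos.mpr, this, Nat.one_le_iff_ne_zero, Int.natAbs_eq_zero, (by linarith : q ≠ 0)]

lemma st7_unique (h : ℕ) (q : ℤ) (hh : 2 ≤ h) (hq : 2 * (h : ℤ) ≤ q) :
    ∀ N : ℕ, ∀ c c' : Multiset ℤ,
    (c.map Int.natAbs).sum + (c'.map Int.natAbs).sum ≤ N →
    (∀ x ∈ c, ∃ n : ℕ, x = q ^ n ∨ x = -(q ^ n)) →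
    (∀ x ∈ c', ∃ n : ℕ, x = q ^ n ∨ x = -(q ^ n)) →
    (∀ x ∈ c, -x ∉ c.erase x) → (∀ x ∈ c', -x ∉ c'.erase x) →
    Multiset.card c ≤ h → Multiset.card c' ≤ h →
    c.sum = c'.sum → c = c' := by
  have hq4 : (4 : ℤ) ≤ q := by
    have : (2 : ℤ) ≤ (h : ℤ) := by exact_mod_cast hh
    linarith
  intro N
  induction N with
  | zero =>
    intro c c' hN hel hel' hcore hcore' hch hch' hsum
    have hc0 : ∀ d : Multiset ℤ, (d.map Int.natAbs).sum = 0 →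
        (∀ x ∈ d, ∃ n : ℕ, x = q ^ n ∨ x = -(q ^ n)) → d = 0 := by
      intro d hd held
      by_contra hne
      obtain ⟨x, hx⟩ := Multiset.exists_mem_of_ne_zero hne
      have h1 : x.natAbs ≤ (d.map Int.natAbs).sum :=
        Multiset.single_le_sum (fun y _ => Nat.zero_le y) _ (Multiset.mem_map_of_mem _ hx)
      have h2 := st7_elem_pos q hq4 (held x hx)
      omega
    rw [hc0 c (by omega) hel, hc0 c' (by omega) hel']
  | succ N IH =>
    intro c c' hN hel hel' hcore hcore' hch hch' hsum
    by_cases hcom : ∃ x, x ∈ c ∧ x ∈ c'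
    · obtain ⟨x, hxc, hxc'⟩ := hcom
      have hce : c = x ::ₘ c.erase x := (Multiset.cons_erase hxc).symm
      have hce' : c' = x ::ₘ c'.erase x := (Multiset.cons_erase hxc').symm
      have hxa : 1 ≤ x.natAbs := st7_elem_pos q hq4 (hel x hxc)
      have hm : (c.map Int.natAbs).sum
          = x.natAbs + ((c.erase x).map Int.natAbs).sum := by
        conv_lhs => rw [hce]
        rw [Multiset.map_cons, Multiset.sum_cons]
      have hm' : (c'.map Int.natAbs).sum
          = x.natAbs + ((c'.erase x).map Int.natAbs).sum := by
        conv_lhs => rw [hce']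
        rw [Multiset.map_cons, Multiset.sum_cons]
      have hs : c.sum = x + (c.erase x).sum := by
        conv_lhs => rw [hce]; rw [Multiset.sum_cons]
      have hs' : c'.sum = x + (c'.erase x).sum := by
        conv_lhs => rw [hce']; rw [Multiset.sum_cons]
      have hcd : Multiset.card (c.erase x) ≤ h :=
        le_trans (Multiset.card_le_card (Multiset.erase_le _ _)) hch
      have hcd' : Multiset.card (c'.erase x) ≤ h :=
        le_trans (Multiset.card_le_card (Multiset.erase_le _ _)) hch'
      have heq := IH (c.erase x) (c'.erase x) (by omega)
        (fun y hy => hel y (Multiset.mem_of_mem_erase hy))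
        (fun y hy => hel' y (Multiset.mem_of_mem_erase hy))
        (st7_core_mono (Multiset.erase_le _ _) hcore)
        (st7_core_mono (Multiset.erase_le _ _) hcore')
        hcd hcd' (by linarith)
      rw [hce, hce', heq]
    · push_neg at hcom
      have hma := st7_mod q hq4 c hel
      have hma' := st7_mod q hq4 c' hel'
      have hdvd : q ∣ ((c'.count 1 : ℤ) - (c'.count (-1) : ℤ))
          - ((c.count 1 : ℤ) - (c.count (-1) : ℤ)) := by
        have h2 := dvd_sub hma hma'
        rw [hsum] at h2
        have h3 : c'.sum - ((c.count 1 : ℤ) - (c.count (-1) : ℤ))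
            - (c'.sum - ((c'.count 1 : ℤ) - (c'.count (-1) : ℤ)))
            = ((c'.count 1 : ℤ) - (c'.count (-1) : ℤ))
              - ((c.count 1 : ℤ) - (c.count (-1) : ℤ)) := by ring
        rwa [h3] at h2
      have hb := st7_count_bound c
      have hb' := st7_count_bound c'
      have hlc1 := Multiset.count_le_card (1 : ℤ) c
      have hlcm := Multiset.count_le_card (-1 : ℤ) c
      have hlc1' := Multiset.count_le_card (1 : ℤ) c'
      have hlcm' := Multiset.count_le_card (-1 : ℤ) c'
      obtain ⟨k, hk⟩ := hdvd
      have hk1 : k ≤ 1 := by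
        have hle : q * k ≤ q * 1 := by
          rw [mul_one, ← hk]; omega
        exact le_of_mul_le_mul_left hle (by linarith)
      have hk2 : -1 ≤ k := by
        have hle : q * (-1) ≤ q * k := by
          rw [← hk]; omega
        exact le_of_mul_le_mul_left hle (by linarith)
      have hcb : c.count 1 = 0 ∨ c.count (-1) = 0 := by
        by_contra hcon
        push_neg at hcon
        have h1 : (1 : ℤ) ∈ c := Multiset.count_pos.mp (by omega)
        have h2 : (-1 : ℤ) ∈ c := Multiset.count_pos.mp (by omega)
        exact hcore 1 h1 ((Multiset.mem_erase_of_ne (by norm_num)).mpr h2)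
      have hcb' : c'.count 1 = 0 ∨ c'.count (-1) = 0 := by
        by_contra hcon
        push_neg at hcon
        have h1 : (1 : ℤ) ∈ c' := Multiset.count_pos.mp (by omega)
        have h2 : (-1 : ℤ) ∈ c' := Multiset.count_pos.mp (by omega)
        exact hcore' 1 h1 ((Multiset.mem_erase_of_ne (by norm_num)).mpr h2)
      have hs1 : c.count 1 = 0 ∨ c'.count 1 = 0 := by
        by_contra hcon
        push_neg at hcon
        exact hcom 1 (Multiset.count_pos.mp (by omega)) (Multiset.count_pos.mp (by omega))
      have hsm : c.count (-1) = 0 ∨ c'.count (-1) = 0 := by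
        by_contra hcon
        push_neg at hcon
        exact hcom (-1) (Multiset.count_pos.mp (by omega)) (Multiset.count_pos.mp (by omega))
      interval_cases k
      · exfalso
        have hx : c.count 1 = Multiset.card c ∧ Multiset.card c = h ∧
            c'.count (-1) = Multiset.card c' ∧ Multiset.card c' = h := by omega
        have hrep : c = Multiset.replicate (Multiset.card c) 1 :=
          Multiset.eq_replicate_card.mpr (fun b hb => (Multiset.count_eq_card.mp hx.1 b hb).symm)
        have hrep' : c' = Multiset.replicate (Multiset.card c') (-1) :=
          Multiset.eq_replicate_card.mpr
            (fun b hb => (Multiset.count_eq_card.mp hx.2.2.1 b hb).symm)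
        rw [hrep, hrep', Multiset.sum_replicate, Multiset.sum_replicate] at hsum
        rw [hx.2.1, hx.2.2.2] at hsum
        simp [nsmul_eq_mul] at hsum
        omega
      · have hno : c.count 1 = 0 ∧ c.count (-1) = 0 ∧ c'.count 1 = 0 ∧ c'.count (-1) = 0 := by
          rcases hcb with h1 | h1 <;> rcases hcb' with h2 | h2 <;>
            rcases hs1 with h3 | h3 <;> rcases hsm with h4 | h4 <;> omega
        have hstep : ∀ d : Multiset ℤ, d.count 1 = 0 → d.count (-1) = 0 →
            (∀ x ∈ d, ∃ n : ℕ, x = q ^ n ∨ x = -(q ^ n)) →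
            (∀ x ∈ d, ∃ n : ℕ, x = q ^ (n + 1) ∨ x = -(q ^ (n + 1))) := by
          intro d h1 hm held x hx
          obtain ⟨n, hn⟩ := held x hx
          rcases Nat.eq_zero_or_pos n with rfl | hpos
          · exfalso
            simp only [pow_zero] at hn
            rcases hn with rfl | rfl
            · exact Multiset.count_eq_zero.mp h1 hx
            · exact Multiset.count_eq_zero.mp hm hx
          · exact ⟨n - 1, by rwa [Nat.sub_add_cancel hpos]⟩
        obtain ⟨c2, hmap, hel2, hcore2, hcard2, hsum2, hmes2⟩ :=
          st7_divstep q hq4 c (hstep c hno.1 hno.2.1 hel) hcore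
        obtain ⟨c2', hmap', hel2', hcore2', hcard2', hsum2', hmes2'⟩ :=
          st7_divstep q hq4 c' (hstep c' hno.2.2.1 hno.2.2.2 hel') hcore'
        have hK4 : 4 ≤ q.natAbs := by
          have h5 : (q.natAbs : ℤ) = q := Int.natAbs_of_nonneg (by linarith)
          omega
        have hmeas : (c2.map Int.natAbs).sum + (c2'.map Int.natAbs).sum ≤ N := by
          set e := (c2.map Int.natAbs).sum + (c2'.map Int.natAbs).sum with he
          have h6 : e * q.natAbs = (c.map Int.natAbs).sum + (c'.map Int.natAbs).sum := by
            rw [hmes2, hmes2', he, add_mul]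
          have h7 : e * 4 ≤ e * q.natAbs := Nat.mul_le_mul_left e hK4
          omega
        have heq2 := IH c2 c2' hmeas hel2 hel2' hcore2 hcore2'
          (by omega) (by omega)
          (mul_right_cancel₀ (by linarith : q ≠ 0) (hsum2 ▸ hsum2' ▸ hsum))
        rw [hmap, hmap', heq2]
      · exfalso
        have hx : c.count (-1) = Multiset.card c ∧ Multiset.card c = h ∧
            c'.count 1 = Multiset.card c' ∧ Multiset.card c' = h := by omega
        have hrep : c = Multiset.replicate (Multiset.card c) (-1) :=
          Multiset.eq_replicate_card.mpr (fun b hb => (Multiset.count_eq_card.mp hx.1 b hb).symm)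
        have hrep' : c' = Multiset.replicate (Multiset.card c') 1 :=
          Multiset.eq_replicate_card.mpr
            (fun b hb => (Multiset.count_eq_card.mp hx.2.2.1 b hb).symm)
        rw [hrep, hrep', Multiset.sum_replicate, Multiset.sum_replicate] at hsum
        rw [hx.2.1, hx.2.2.2] at hsum
        simp [nsmul_eq_mul] at hsum
        omega

lemma st7_zero_count {c : Multiset ℤ} (hcore : ∀ x ∈ c, -x ∉ c.erase x) : c.count 0 ≤ 1 := by
  by_cases h0 : (0 : ℤ) ∈ c
  · have h1 := hcore 0 h0
    rw [neg_zero] at h1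
    have h3 : (c.erase 0).count 0 = 0 := Multiset.count_eq_zero.mpr h1
    have h2 := Multiset.count_erase_self (0 : ℤ) c
    have h4 : 1 ≤ c.count 0 := Multiset.one_le_count_iff_mem.mpr h0
    omega
  · rw [Multiset.count_eq_zero.mpr h0]; omega

lemma st7_zero_split (c : Multiset ℤ) :
    c = Multiset.replicate (c.count 0) 0 + c.filter (· ≠ 0) := by
  ext b
  by_cases hb : b = (0 : ℤ)
  · subst hb
    simp [Multiset.count_replicate, Multiset.count_filter]
  · simp [Multiset.count_replicate, Multiset.count_filter, hb]
    intro h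
    exact absurd h.symm hb

lemma st7_full (h : ℕ) (q : ℤ) (hh : 2 ≤ h) (hq : 2 * (h : ℤ) ≤ q)
    {c c' : Multiset ℤ}
    (helA : ∀ x ∈ c, (∃ n : ℕ, x = q ^ n ∨ x = -(q ^ n)) ∨ x = 0)
    (helA' : ∀ x ∈ c', (∃ n : ℕ, x = q ^ n ∨ x = -(q ^ n)) ∨ x = 0)
    (hcore : ∀ x ∈ c, -x ∉ c.erase x) (hcore' : ∀ x ∈ c', -x ∉ c'.erase x)
    (hch : Multiset.card c ≤ h) (hch' : Multiset.card c' ≤ h)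
    (hpar : Multiset.card c % 2 = Multiset.card c' % 2)
    (hsum : c.sum = c'.sum) : c = c' := by
  have hd := st7_zero_split c
  have hd' := st7_zero_split c'
  have hfel : ∀ x ∈ c.filter (· ≠ 0), ∃ n : ℕ, x = q ^ n ∨ x = -(q ^ n) := by
    intro x hx
    obtain ⟨hxc, h1⟩ := Multiset.mem_filter.mp hx
    rcases helA x hxc with h2 | h2
    · exact h2
    · exact absurd h2 h1
  have hfel' : ∀ x ∈ c'.filter (· ≠ 0), ∃ n : ℕ, x = q ^ n ∨ x = -(q ^ n) := by
    intro x hx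
    obtain ⟨hxc, h1⟩ := Multiset.mem_filter.mp hx
    rcases helA' x hxc with h2 | h2
    · exact h2
    · exact absurd h2 h1
  have hsumf : (c.filter (· ≠ 0)).sum = (c'.filter (· ≠ 0)).sum := by
    have e1 : c.sum = (c.filter (· ≠ 0)).sum := by
      conv_lhs => rw [hd]
      rw [Multiset.sum_add, Multiset.sum_replicate, smul_zero, zero_add]
    have e2 : c'.sum = (c'.filter (· ≠ 0)).sum := by
      conv_lhs => rw [hd']
      rw [Multiset.sum_add, Multiset.sum_replicate, smul_zero, zero_add]
    rw [← e1, ← e2, hsum]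
  have hfeq : c.filter (· ≠ 0) = c'.filter (· ≠ 0) :=
    st7_unique h q hh hq
      (((c.filter (· ≠ 0)).map Int.natAbs).sum + ((c'.filter (· ≠ 0)).map Int.natAbs).sum)
      _ _ (le_refl _) hfel hfel'
      (st7_core_mono (Multiset.filter_le _ _) hcore)
      (st7_core_mono (Multiset.filter_le _ _) hcore')
      (le_trans (Multiset.card_le_card (Multiset.filter_le _ _)) hch)
      (le_trans (Multiset.card_le_card (Multiset.filter_le _ _)) hch')
      hsumf
  have hz := st7_zero_count hcore
  have hz' := st7_zero_count hcore'
  have hcc : Multiset.card c = c.count 0 + Multiset.card (c.filter (· ≠ 0)) := by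
    conv_lhs => rw [hd]
    rw [Multiset.card_add, Multiset.card_replicate]
  have hcc' : Multiset.card c' = c'.count 0 + Multiset.card (c'.filter (· ≠ 0)) := by
    conv_lhs => rw [hd']
    rw [Multiset.card_add, Multiset.card_replicate]
  have hzeq : c.count 0 = c'.count 0 := by
    rw [hfeq] at hcc
    omega
  rw [hd, hd', hzeq, hfeq]

/-- For integer q with q ≥ 2h and h ≥ 2, the set of all ±q^n together with 0 satisfies
property P(h). -/
theorem statement7 (h : ℕ) (q : ℤ) (hh : 2 ≤ h) (hq : (2 * h : ℤ) ≤ q) :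
    PropertyP {x : ℤ | (∃ n : ℕ, x = q ^ n ∨ x = -(q ^ n)) ∨ x = 0} h := by
  intro D hD
  obtain ⟨s0, hs0⟩ := hD
  set A : Set ℤ := {x : ℤ | (∃ n : ℕ, x = q ^ n ∨ x = -(q ^ n)) ∨ x = 0} with hA
  have hAsym : ∀ x ∈ A, -x ∈ A := by
    intro x hx
    rcases hx with ⟨n, hn | hn⟩ | hn
    · exact Or.inl ⟨n, Or.inr (by rw [hn])⟩
    · exact Or.inl ⟨n, Or.inl (by rw [hn, neg_neg])⟩
    · exact Or.inr (by rw [hn, neg_zero])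
  -- reduce any representation to a core
  have hred : ∀ s : Multiset ℤ, IsRep A h D s →
      ∃ c p : Multiset ℤ, IsCore A h c ∧ c.sum = D ∧
        (∀ u ∈ p, u ∈ A ∧ -u ∈ A) ∧ s = c + p + p.map (fun u => -u) := by
    intro s hs
    obtain ⟨hcard, hmem, hsum⟩ := hs
    obtain ⟨c, p, hcardc, hcs, hps, hcore, hdec⟩ := st7_reduce s
    refine ⟨c, p, ⟨?_, ?_, fun x hx => hmem x (Multiset.mem_of_le hcs hx), hcore⟩, ?_, ?_, hdec⟩
    · omega
    · omega
    · have h1 : s.sum = c.sum + p.sum + (p.map (fun u => -u)).sum := by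
        rw [hdec, Multiset.sum_add, Multiset.sum_add]
      rw [st7_sum_neg] at h1
      rw [hsum] at h1
      linarith
    · intro u hu
      have h1 : u ∈ A := hmem u (Multiset.mem_of_le hps hu)
      exact ⟨h1, hAsym u h1⟩
  obtain ⟨c0, p0, hcore0, hsum0, hp0, hdec0⟩ := hred s0 hs0
  have hcoreuniq : ∀ c : Multiset ℤ, IsCore A h c → c.sum = D → c = c0 := by
    intro c hc hcs
    obtain ⟨h1, h2, h3, h4⟩ := hc
    obtain ⟨g1, g2, g3, g4⟩ := hcore0
    exact st7_full h q hh (by exact_mod_cast hq) h3 g3 h4 g4 h1 g1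
      (by omega) (by rw [hcs, hsum0])
  refine ⟨c0, ⟨hcore0, ?_⟩, ?_⟩
  · intro s hs
    obtain ⟨c1, p1, hc1, hs1, hp1, hdec1⟩ := hred s hs
    have := hcoreuniq c1 hc1 hs1
    exact ⟨p1, hp1, by rw [hdec1, this]⟩
  · intro c' hc'
    obtain ⟨hcore', hall'⟩ := hc'
    obtain ⟨p', hp', hdec'⟩ := hall' s0 hs0
    have hsum' : c'.sum = D := by
      have h1 : s0.sum = c'.sum + p'.sum + (p'.map (fun u => -u)).sum := by
        rw [hdec', Multiset.sum_add, Multiset.sum_add]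
      rw [st7_sum_neg] at h1
      have h2 : s0.sum = D := hs0.2.2
      linarith
    exact hcoreuniq c' hcore' hsum'
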